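/- Let p be the i.i.d. Bernoulli(q) measure on {0,1}ⁿ, 0 < q < 1, and let 𝓜 be the path measure of a stationary two-state Markov chain with parameters 0 < ε, δ < 1 and q = ε/(ε+δ). If the entropy rate H(𝓜) = (δ/(ε+δ))h(ε) + (ε/(ε+δ))h(δ) differs from the binary entropy h(q), then the Bhattacharyya coefficient Σ_{x∈{0,1}ⁿ} √(p(x)𝓜(x)) → 0 as n → ∞; consequently the fidelity F(𝔐, ρ_st^⊗n) between the corresponding diagonal quantum states tends to 0. -/

import Mathlib

open Matrix Filter
open scoped Classical ComplexOrder

/-- The positive semidefinite square root of a matrix (junk value `0` off PSD matrices). -/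
noncomputable def psdSqrt {d : Type*} [Fintype d] [DecidableEq d]
    (A : Matrix d d ℂ) : Matrix d d ℂ :=
  if h : A.PosSemidef then (h.1.eigenvectorUnitary : Matrix d d ℂ) *
    diagonal ((↑) ∘ (Real.sqrt ·) ∘ h.1.eigenvalues) *
    (star (h.1.eigenvectorUnitary : Matrix d d ℂ)) else 0

/-- Uhlmann fidelity `F(ρ,σ) = (tr √(√σ ρ √σ))²`. -/
noncomputable def qFidelity {d : Type*} [Fintype d] [DecidableEq d]
    (ρ σ : Matrix d d ℂ) : ℝ :=
  ((psdSqrt (psdSqrt σ * ρ * psdSqrt σ)).trace.re) ^ 2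

/-- Probability of the path `x` of a Markov chain on `Fin 2` with initial
distribution `π` and transition matrix `P`. -/
noncomputable def pathProb (P : Matrix (Fin 2) (Fin 2) ℝ) (π : Fin 2 → ℝ)
    {n : ℕ} (x : Fin n → Fin 2) : ℝ :=
  (if h : 0 < n then π (x ⟨0, h⟩) else 1) *
  ∏ i : Fin n, if h : (i : ℕ) + 1 < n then P (x i) (x ⟨(i : ℕ) + 1, h⟩) else 1

/-- The `n`-fold tensor power of a `2×2` matrix, as a matrix indexed by
binary strings `Fin n → Fin 2`. -/
noncomputable def tensorPow (ρ : Matrix (Fin 2) (Fin 2) ℂ) (n : ℕ) :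
    Matrix (Fin n → Fin 2) (Fin n → Fin 2) ℂ :=
  fun x y => ∏ i : Fin n, ρ (x i) (y i)

/-- Binary entropy (in bits). -/
noncomputable def binEnt (p : ℝ) : ℝ :=
  -(p * Real.logb 2 p) - (1 - p) * Real.logb 2 (1 - p)

/-! ### Auxiliary lemmas -/

lemma my_amgm_le {a c : ℝ} (ha : 0 ≤ a) (hc : 0 ≤ c) : Real.sqrt (a * c) ≤ (a + c) / 2 := by
  have h1 : a * c ≤ ((a + c) / 2) ^ 2 := by nlinarith [sq_nonneg (a - c)]
  calc Real.sqrt (a * c) ≤ Real.sqrt (((a + c) / 2) ^ 2) := Real.sqrt_le_sqrt h1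
    _ = (a + c) / 2 := Real.sqrt_sq (by positivity)

lemma my_amgm_lt {a c : ℝ} (ha : 0 ≤ a) (hc : 0 ≤ c) (hac : a ≠ c) :
    Real.sqrt (a * c) < (a + c) / 2 := by
  have hne : a - c ≠ 0 := sub_ne_zero.mpr hac
  have h0 : 0 < (a - c) ^ 2 := by positivity
  have h1 : a * c < ((a + c) / 2) ^ 2 := by nlinarith
  calc Real.sqrt (a * c) < Real.sqrt (((a + c) / 2) ^ 2) :=
        Real.sqrt_lt_sqrt (by positivity) h1
    _ = (a + c) / 2 := Real.sqrt_sq (by positivity)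

open scoped MatrixOrder in
lemma psdSqrt_diagonal {d : Type*} [Fintype d] [DecidableEq d] (v : d → ℝ)
    (hv : ∀ i, 0 ≤ v i) :
    psdSqrt (Matrix.diagonal (fun i => ((v i : ℝ) : ℂ))) =
      Matrix.diagonal (fun i => ((Real.sqrt (v i) : ℝ) : ℂ)) := by
  have hpsd : (Matrix.diagonal (fun i => ((v i : ℝ) : ℂ))).PosSemidef :=
    Matrix.PosSemidef.diagonal (fun i => by
      simpa using Complex.zero_le_real.mpr (hv i))
  have hB : (Matrix.diagonal (fun i => ((Real.sqrt (v i) : ℝ) : ℂ))).PosSemidef :=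
    Matrix.PosSemidef.diagonal (fun i => by
      simpa using Complex.zero_le_real.mpr (Real.sqrt_nonneg (v i)))
  rw [psdSqrt, dif_pos hpsd]
  have key : CFC.sqrt (Matrix.diagonal (fun i => ((v i : ℝ) : ℂ))) =
      Matrix.diagonal (fun i => ((Real.sqrt (v i) : ℝ) : ℂ)) := by
    refine CFC.sqrt_unique ?_ (Matrix.nonneg_iff_posSemidef.mpr hB)
    rw [Matrix.diagonal_mul_diagonal]
    refine congrArg Matrix.diagonal (funext fun i => ?_)
    rw [← Complex.ofReal_mul, Real.mul_self_sqrt (hv i)]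
  rw [← key, CFC.sqrt_eq_cfc, cfc_nnreal_eq_real _ _ (Matrix.nonneg_iff_posSemidef.mpr hpsd),
    hpsd.1.cfc_eq]
  simp [Matrix.IsHermitian.cfc, Function.comp_def, Real.coe_sqrt, Real.coe_toNNReal',
    Unitary.conjStarAlgAut_apply]
  simp only [max_eq_left (hpsd.eigenvalues_nonneg _)]

lemma qFidelity_diagonal {d : Type*} [Fintype d] [DecidableEq d] (a b : d → ℝ)
    (ha : ∀ i, 0 ≤ a i) (hb : ∀ i, 0 ≤ b i) :
    qFidelity (Matrix.diagonal (fun i => ((a i : ℝ) : ℂ)))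
        (Matrix.diagonal (fun i => ((b i : ℝ) : ℂ)))
      = (∑ i, Real.sqrt (a i * b i)) ^ 2 := by
  rw [qFidelity, psdSqrt_diagonal b hb]
  have h1 : Matrix.diagonal (fun i => ((Real.sqrt (b i) : ℝ) : ℂ)) *
        Matrix.diagonal (fun i => ((a i : ℝ) : ℂ)) *
        Matrix.diagonal (fun i => ((Real.sqrt (b i) : ℝ) : ℂ))
      = Matrix.diagonal (fun i => (((a i * b i : ℝ)) : ℂ)) := by
    rw [Matrix.diagonal_mul_diagonal, Matrix.diagonal_mul_diagonal]
    refine congrArg Matrix.diagonal (funext fun i => ?_)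
    have h2 : Real.sqrt (b i) * a i * Real.sqrt (b i) = a i * b i := by
      rw [mul_comm (Real.sqrt (b i)) (a i), mul_assoc, Real.mul_self_sqrt (hb i)]
    calc ((Real.sqrt (b i) : ℝ) : ℂ) * ((a i : ℝ) : ℂ) * ((Real.sqrt (b i) : ℝ) : ℂ)
        = ((Real.sqrt (b i) * a i * Real.sqrt (b i) : ℝ) : ℂ) := by push_cast; ring
      _ = ((a i * b i : ℝ) : ℂ) := by rw [h2]
  rw [h1, psdSqrt_diagonal _ (fun i => mul_nonneg (ha i) (hb i)), Matrix.trace_diagonal]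
  norm_cast

lemma pathProb_snoc (P : Matrix (Fin 2) (Fin 2) ℝ) (π : Fin 2 → ℝ)
    {n : ℕ} (x : Fin (n+1) → Fin 2) (b : Fin 2) :
    pathProb P π (Fin.snoc x b) = pathProb P π x * P (x (Fin.last n)) b := by
  unfold pathProb
  rw [dif_pos (Nat.succ_pos (n+1)), dif_pos (Nat.succ_pos n)]
  have hsnoc : ∀ (k : ℕ) (h : k < n+1) (h2 : k < n+2),
      (Fin.snoc x b : Fin (n+2) → Fin 2) (⟨k, h2⟩ : Fin (n+2)) = x ⟨k, h⟩ := by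
    intro k h h2
    have : (⟨k, h2⟩ : Fin (n+2)) = Fin.castSucc ⟨k, h⟩ := rfl
    rw [this, Fin.snoc_castSucc]
  have hsnocl : ∀ (h2 : n+1 < n+2), (Fin.snoc x b : Fin (n+2) → Fin 2) (⟨n+1, h2⟩ : Fin (n+2)) = b := by
    intro h2
    have : (⟨n+1, h2⟩ : Fin (n+2)) = Fin.last (n+1) := rfl
    rw [this, Fin.snoc_last]
  have h0 : (Fin.snoc x b : Fin (n+2) → Fin 2) (⟨0, Nat.succ_pos (n+1)⟩ : Fin (n+2)) = x ⟨0, Nat.succ_pos n⟩ :=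
    hsnoc 0 (Nat.succ_pos n) (Nat.succ_pos (n+1))
  rw [h0]
  have hL : (∏ i : Fin (n+2), if h : (i : ℕ) + 1 < n+2
        then P ((Fin.snoc x b : Fin (n+2) → Fin 2) i) ((Fin.snoc x b : Fin (n+2) → Fin 2) ⟨(i : ℕ) + 1, h⟩) else 1)
      = (∏ j : Fin n, P (x j.castSucc) (x ⟨(j : ℕ) + 1, by omega⟩)) * P (x (Fin.last n)) b := by
    rw [Fin.prod_univ_castSucc]
    have hlast : (if h : ((Fin.last (n+1) : Fin (n+2)) : ℕ) + 1 < n+2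
        then P ((Fin.snoc x b : Fin (n+2) → Fin 2) (Fin.last (n+1)))
          ((Fin.snoc x b : Fin (n+2) → Fin 2) ⟨((Fin.last (n+1) : Fin (n+2)) : ℕ) + 1, h⟩) else 1) = 1 := by
      rw [dif_neg (by simp)]
    rw [hlast, mul_one, Fin.prod_univ_castSucc]
    congr 1
    · refine Finset.prod_congr rfl fun j _ => ?_
      rw [dif_pos (by simp)]
      rw [Fin.snoc_castSucc]
      exact congrArg (P (x j.castSucc)) (hsnoc ((j : ℕ) + 1) (by omega) (by omega))
    · rw [dif_pos (by simp)]
      rw [Fin.snoc_castSucc]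
      exact congrArg (P (x (Fin.last n))) (hsnocl (by omega))
  have hR : (∏ i : Fin (n+1), if h : (i : ℕ) + 1 < n+1
        then P (x i) (x ⟨(i : ℕ) + 1, h⟩) else 1)
      = ∏ j : Fin n, P (x j.castSucc) (x ⟨(j : ℕ) + 1, by omega⟩) := by
    rw [Fin.prod_univ_castSucc]
    rw [dif_neg (by simp), mul_one]
    refine Finset.prod_congr rfl fun j _ => ?_
    rw [dif_pos (by simp)]
    rfl
  rw [hL, hR]
  ring

lemma sum_snoc_fin2 {m : ℕ} (f : (Fin (m+1) → Fin 2) → ℝ) :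
    ∑ y : Fin (m+1) → Fin 2, f y =
      ∑ x : Fin m → Fin 2, ∑ b : Fin 2, f (Fin.snoc x b) := by
  let e : (Fin m → Fin 2) × Fin 2 ≃ (Fin (m+1) → Fin 2) :=
    { toFun := fun z => Fin.snoc z.1 z.2
      invFun := fun y => (Fin.init y, y (Fin.last m))
      left_inv := fun z => by simp
      right_inv := fun y => by simp }
  have h2 : ∑ z : (Fin m → Fin 2) × Fin 2, f (Fin.snoc z.1 z.2)
      = ∑ x : Fin m → Fin 2, ∑ b : Fin 2, f (Fin.snoc x b) :=
    Fintype.sum_prod_type _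
  have h1 : ∑ z : (Fin m → Fin 2) × Fin 2, f (Fin.snoc z.1 z.2)
      = ∑ y : Fin (m+1) → Fin 2, f y :=
    Fintype.sum_equiv e _ _ (fun z => rfl)
  rw [← h1, h2]

/-- If the entropy rate of the stationary Markov chain differs from the binary
entropy of its stationary marginal `q = ε/(ε+δ)`, then the Bhattacharyya
coefficient between the i.i.d. Bernoulli(q) measure and the Markov path measure
tends to `0`, and hence so does the fidelity `F(𝔐, ρ_st^⊗n)`. -/
theorem stmt17 (ε δ q : ℝ) (hε0 : 0 < ε) (hε1 : ε < 1) (hδ0 : 0 < δ) (hδ1 : δ < 1)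
    (hq : q = ε / (ε + δ))
    (P : Matrix (Fin 2) (Fin 2) ℝ) (hP : P = !![1 - ε, ε; δ, 1 - δ])
    (π : Fin 2 → ℝ) (hπ : π = ![δ / (ε + δ), ε / (ε + δ)])
    (hent : δ / (ε + δ) * binEnt ε + ε / (ε + δ) * binEnt δ ≠ binEnt q)
    (p : ∀ n : ℕ, (Fin n → Fin 2) → ℝ)
    (hiid : ∀ (n : ℕ) (x : Fin n → Fin 2),
      p n x = ∏ i : Fin n, (if x i = 1 then q else 1 - q))
    (𝔐 : ∀ n : ℕ, Matrix (Fin n → Fin 2) (Fin n → Fin 2) ℂ)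
    (h𝔐 : ∀ n : ℕ, 𝔐 n =
      Matrix.diagonal (fun x : Fin n → Fin 2 => ((pathProb P π x : ℝ) : ℂ)))
    (ρst : Matrix (Fin 2) (Fin 2) ℂ)
    (hρst : ρst = Matrix.diagonal (fun i => ((π i : ℝ) : ℂ))) :
    Tendsto (fun n : ℕ =>
      ∑ x : Fin n → Fin 2, Real.sqrt (p n x * pathProb P π x)) atTop (nhds 0) ∧
    Tendsto (fun n : ℕ => qFidelity (𝔐 n) (tensorPow ρst n)) atTop (nhds 0) := by
  have hs : 0 < ε + δ := by linarith
  have hsne : (ε + δ) ≠ 0 := ne_of_gt hs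
  have hq0 : 0 < q := by rw [hq]; positivity
  have hq1 : q < 1 := by rw [hq, div_lt_one hs]; linarith
  -- `ε + δ ≠ 1` follows from the entropy hypothesis
  have hεδ : ε + δ ≠ 1 := by
    intro h1
    apply hent
    have hδε : δ = 1 - ε := by linarith
    have hqe : q = ε := by rw [hq, h1, div_one]
    have hsym : binEnt (1 - ε) = binEnt ε := by unfold binEnt; ring_nf
    rw [hδε, hqe, hsym]
    have h2 : ε + (1 - ε) = (1 : ℝ) := by ring
    rw [h2]
    ring
  have hqε : q ≠ ε := by
    intro h
    rw [hq] at h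
    have h2 : ε = ε * (ε + δ) := (div_eq_iff hsne).mp h
    have h3 : ε * 1 = ε * (ε + δ) := by rw [mul_one]; exact h2
    have h4 : (1 : ℝ) = ε + δ := mul_left_cancel₀ (ne_of_gt hε0) h3
    exact hεδ h4.symm
  have h1q : 1 - q = δ / (ε + δ) := by rw [hq]; field_simp; ring
  have hq'δ : 1 - q ≠ δ := by
    intro h
    rw [h1q] at h
    have h2 : δ = δ * (ε + δ) := (div_eq_iff hsne).mp h
    have h3 : δ * 1 = δ * (ε + δ) := by rw [mul_one]; exact h2
    have h4 : (1 : ℝ) = ε + δ := mul_left_cancel₀ (ne_of_gt hδ0) h3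
    exact hεδ h4.symm
  -- entries of `P` and `π`
  have hP00 : P 0 0 = 1 - ε := by simp [hP]
  have hP01 : P 0 1 = ε := by simp [hP]
  have hP10 : P 1 0 = δ := by simp [hP]
  have hP11 : P 1 1 = 1 - δ := by simp [hP]
  have hπq : ∀ i : Fin 2, π i = if i = 1 then q else 1 - q := by
    intro i
    fin_cases i
    · simp [hπ]
      linarith [h1q]
    · simp [hπ]
      linarith [hq]
  have hπnn : ∀ i, 0 ≤ π i := by
    intro i
    rw [hπq i]
    split_ifs <;> linarith
  have hπle : ∀ i, π i ≤ 1 := by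
    intro i
    rw [hπq i]
    split_ifs <;> linarith
  have hPnn : ∀ a c : Fin 2, 0 ≤ P a c := by
    intro a c
    fin_cases a <;> fin_cases c <;> simp [hP] <;> linarith
  have hpnn : ∀ (n : ℕ) (x : Fin n → Fin 2), 0 ≤ p n x := by
    intro n x
    rw [hiid]
    exact Finset.prod_nonneg fun i _ => by split_ifs <;> linarith
  have hMnn : ∀ (n : ℕ) (x : Fin n → Fin 2), 0 ≤ pathProb P π x := by
    intro n x
    unfold pathProb
    apply mul_nonneg
    · split_ifs
      · exact hπnn _
      · exact zero_le_one
    · exact Finset.prod_nonneg fun i _ => by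
        split_ifs
        · exact hPnn _ _
        · exact zero_le_one
  -- the contraction coefficient
  set r : ℝ := max (Real.sqrt ((1-q) * P 0 0) + Real.sqrt (q * P 0 1))
      (Real.sqrt ((1-q) * P 1 0) + Real.sqrt (q * P 1 1)) with hrdef
  have hrnn : 0 ≤ r := le_trans (by positivity) (le_max_left _ _)
  have hr0lt : Real.sqrt ((1-q) * P 0 0) + Real.sqrt (q * P 0 1) < 1 := by
    rw [hP00, hP01]
    have h1 := my_amgm_lt (a := 1-q) (c := 1-ε) (by linarith) (by linarith)
      (by intro hcc; exact hqε (by linarith))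
    have h2 := my_amgm_le (a := q) (c := ε) (le_of_lt hq0) (le_of_lt hε0)
    linarith
  have hr1lt : Real.sqrt ((1-q) * P 1 0) + Real.sqrt (q * P 1 1) < 1 := by
    rw [hP10, hP11]
    have h1 := my_amgm_lt (a := 1-q) (c := δ) (by linarith) (by linarith) hq'δ
    have h2 := my_amgm_le (a := q) (c := 1-δ) (le_of_lt hq0) (by linarith)
    linarith
  have hrlt : r < 1 := by rw [hrdef]; exact max_lt hr0lt hr1lt
  have hkey : ∀ a : Fin 2,
      Real.sqrt ((1-q) * P a 0) + Real.sqrt (q * P a 1) ≤ r := by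
    intro a
    fin_cases a
    · exact le_max_left _ _
    · exact le_max_right _ _
  -- recursion for the i.i.d. measure
  have hprec : ∀ (n : ℕ) (x : Fin n → Fin 2) (b : Fin 2),
      p (n+1) (Fin.snoc x b) = p n x * (if b = 1 then q else 1 - q) := by
    intro n x b
    rw [hiid, hiid, Fin.prod_univ_castSucc]
    congr 1
    · exact Finset.prod_congr rfl fun i _ => by rw [Fin.snoc_castSucc]
    · rw [Fin.snoc_last]
  -- the Bhattacharyya coefficient
  set g : ℕ → ℝ := fun n => ∑ x : Fin n → Fin 2,
      Real.sqrt (p n x * pathProb P π x) with hg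
  have hgnn : ∀ n, 0 ≤ g n := fun n => Finset.sum_nonneg fun x _ => Real.sqrt_nonneg _
  have hstep : ∀ n : ℕ, g (n+2) ≤ r * g (n+1) := by
    intro n
    simp only [hg]
    calc (∑ y : Fin (n+2) → Fin 2, Real.sqrt (p (n+2) y * pathProb P π y))
        = ∑ x : Fin (n+1) → Fin 2, ∑ b : Fin 2,
            Real.sqrt (p (n+2) (Fin.snoc x b) * pathProb P π (Fin.snoc x b)) :=
          sum_snoc_fin2 _
      _ = ∑ x : Fin (n+1) → Fin 2, Real.sqrt (p (n+1) x * pathProb P π x) *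
            (∑ b : Fin 2, Real.sqrt ((if b = 1 then q else 1 - q) *
              P (x (Fin.last n)) b)) := by
          refine Finset.sum_congr rfl fun x _ => ?_
          rw [Finset.mul_sum]
          refine Finset.sum_congr rfl fun b _ => ?_
          rw [hprec, pathProb_snoc]
          rw [show p (n+1) x * (if b = 1 then q else 1 - q) *
              (pathProb P π x * P (x (Fin.last n)) b)
            = (p (n+1) x * pathProb P π x) *
              ((if b = 1 then q else 1 - q) * P (x (Fin.last n)) b) from by ring]
          rw [Real.sqrt_mul (mul_nonneg (hpnn _ _) (hMnn _ _))]
      _ ≤ ∑ x : Fin (n+1) → Fin 2, Real.sqrt (p (n+1) x * pathProb P π x) * r := by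
          refine Finset.sum_le_sum fun x _ => ?_
          refine mul_le_mul_of_nonneg_left ?_ (Real.sqrt_nonneg _)
          rw [Fin.sum_univ_two]
          norm_num
          exact hkey (x (Fin.last n))
      _ = r * ∑ x : Fin (n+1) → Fin 2, Real.sqrt (p (n+1) x * pathProb P π x) := by
          rw [← Finset.sum_mul, mul_comm]
  have hbase : g 1 ≤ 2 := by
    simp only [hg]
    have hterm : ∀ x : Fin 1 → Fin 2, Real.sqrt (p 1 x * pathProb P π x) ≤ 1 := by
      intro x
      apply Real.sqrt_le_one.mpr
      have h1 : p 1 x ≤ 1 := by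
        rw [hiid, Fin.prod_univ_one]
        split_ifs <;> linarith
      have h2 : pathProb P π x ≤ 1 := by
        unfold pathProb
        rw [dif_pos (by norm_num : (0:ℕ) < 1), Fin.prod_univ_one,
          dif_neg (by simp), mul_one]
        exact hπle _
      calc p 1 x * pathProb P π x ≤ 1 * 1 :=
            mul_le_mul h1 h2 (hMnn _ _) zero_le_one
        _ = 1 := mul_one 1
    refine le_trans (Finset.sum_le_sum fun x _ => hterm x) ?_
    simp [Finset.card_univ]
  have hgeo : ∀ n : ℕ, g (n+1) ≤ 2 * r ^ n := by
    intro n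
    induction n with
    | zero => simpa using hbase
    | succ k ih =>
      calc g (k+2) ≤ r * g (k+1) := hstep k
        _ ≤ r * (2 * r ^ k) := mul_le_mul_of_nonneg_left ih hrnn
        _ = 2 * r ^ (k+1) := by ring
  have hgt : Tendsto g atTop (nhds 0) := by
    rw [← tendsto_add_atTop_iff_nat 1]
    refine squeeze_zero (fun n => hgnn _) (fun n => hgeo n) ?_
    have h2 := (tendsto_pow_atTop_nhds_zero_of_lt_one hrnn hrlt).const_mul (2:ℝ)
    simpa using h2
  refine ⟨hgt, ?_⟩
  -- the tensor power is the diagonal i.i.d. state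
  have htp : ∀ n : ℕ, tensorPow ρst n =
      Matrix.diagonal (fun x : Fin n → Fin 2 => ((p n x : ℝ) : ℂ)) := by
    intro n
    funext x y
    by_cases hxy : x = y
    · subst hxy
      show (∏ i : Fin n, ρst (x i) (x i)) = _
      rw [Matrix.diagonal_apply_eq]
      rw [hρst, hiid]
      push_cast
      refine Finset.prod_congr rfl fun i _ => ?_
      rw [Matrix.diagonal_apply_eq]
      rw [hπq (x i)]
    · show (∏ i : Fin n, ρst (x i) (y i)) = _
      rw [Matrix.diagonal_apply_ne _ hxy]
      obtain ⟨i, hi⟩ := Function.ne_iff.mp hxy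
      exact Finset.prod_eq_zero (Finset.mem_univ i)
        (by rw [hρst, Matrix.diagonal_apply_ne _ hi])
  have hfid : ∀ n : ℕ, qFidelity (𝔐 n) (tensorPow ρst n) = (g n) ^ 2 := by
    intro n
    rw [h𝔐, htp,
      qFidelity_diagonal (fun x => pathProb P π x) (p n) (hMnn n) (hpnn n)]
    simp only [hg]
    refine congrArg (· ^ 2) (Finset.sum_congr rfl fun x _ => ?_)
    rw [mul_comm]
  rw [show (fun n : ℕ => qFidelity (𝔐 n) (tensorPow ρst n))
      = fun n : ℕ => (g n) ^ 2 from funext hfid]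
  simpa using hgt.pow 2
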